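/- arXiv:2205.14235 — 2 statements merged into one kernel-verified Lean document; each statement's English description precedes it below -/
import Mathlib

section
/- Let K_1 and K_2 be digital cubes in ℤⁿ with axis-parallel edges whose union X = K_1 ∪ K_2 is a wedge (K_1 ∩ K_2 is a single point) and hence c_1-connected. Then the union of the corner sets of K_1 and K_2 is a c_1-freezing set for X. -/
/-- A κ-path of some length m in S from a to b (consecutive points equal or adjacent). -/
def DigPath {α : Type*} (κ : α → α → Prop) (S : Set α) (a b : α) : Prop :=
  ∃ (m : ℕ) (r : ℕ → α), r 0 = a ∧ r m = b ∧ (∀ k, k ≤ m → r k ∈ S) ∧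
    ∀ k, k < m → r k = r (k + 1) ∨ κ (r k) (r (k + 1))

/-- S is κ-connected: any two points of S are joined by a κ-path in S. -/
def DigConnected {α : Type*} (κ : α → α → Prop) (S : Set α) : Prop :=
  ∀ a ∈ S, ∀ b ∈ S, DigPath κ S a b

/-- (κ,λ)-continuity via the adjacency characterization. -/
def DigCont {α β : Type*} (κ : α → α → Prop) (lam : β → β → Prop)
    (X : Set α) (f : α → β) : Prop :=
  ∀ x ∈ X, ∀ y ∈ X, κ x y → f x = f y ∨ lam (f x) (f y)

/-- A ⊆ X is a freezing set for (X, κ). -/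
def FreezingSet {α : Type*} (κ : α → α → Prop) (X A : Set α) : Prop :=
  A ⊆ X ∧ ∀ g : α → α, (∀ x ∈ X, g x ∈ X) → DigCont κ κ X g →
    (∀ a ∈ A, g a = a) → ∀ x ∈ X, g x = x

/-- The c_u adjacency on ℤⁿ: distinct points differing by exactly 1 in at most u
coordinates and equal in all others. -/
def cAdj (n u : ℕ) (x y : Fin n → ℤ) : Prop :=
  x ≠ y ∧ (∀ i, x i = y i ∨ |x i - y i| = 1) ∧
    (Finset.univ.filter (fun i => x i ≠ y i)).card ≤ u

/-- The boundary of A ⊆ ℤⁿ: points of A that are c_1-adjacent to a point outside A. -/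
def Bd (n : ℕ) (A : Set (Fin n → ℤ)) : Set (Fin n → ℤ) :=
  {x ∈ A | ∃ y, y ∉ A ∧ cAdj n 1 x y}

/-- ℓ¹ distance on ℤⁿ. -/
def d1 {n : ℕ} (x y : Fin n → ℤ) : ℤ := ∑ i, |x i - y i|

lemma d1_nonneg {n : ℕ} (x y : Fin n → ℤ) : 0 ≤ d1 x y :=
  Finset.sum_nonneg fun i _ => abs_nonneg _

lemma d1_eq_zero {n : ℕ} {x y : Fin n → ℤ} (h : d1 x y = 0) : x = y := by
  funext i
  have h1 := (Finset.sum_eq_zero_iff_of_nonneg (fun i _ => abs_nonneg (x i - y i))).1 h i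
    (Finset.mem_univ i)
  have := abs_eq_zero.1 h1
  omega

lemma d1_triangle {n : ℕ} (x y z : Fin n → ℤ) : d1 x z ≤ d1 x y + d1 y z := by
  rw [d1, d1, d1, ← Finset.sum_add_distrib]
  exact Finset.sum_le_sum fun i _ => abs_sub_le _ _ _

lemma adj_d1 {n : ℕ} {x y : Fin n → ℤ} (h : cAdj n 1 x y) : d1 x y ≤ 1 := by
  obtain ⟨-, h2, h3⟩ := h
  have heq : ∑ i ∈ Finset.univ.filter (fun i => x i ≠ y i), |x i - y i| = d1 x y := by
    apply Finset.sum_filter_of_ne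
    intro i _ hne
    intro hxy
    exact hne (by rw [hxy, sub_self, abs_zero])
  have hle : ∑ i ∈ Finset.univ.filter (fun i => x i ≠ y i), |x i - y i|
      ≤ (Finset.univ.filter (fun i => x i ≠ y i)).card • (1 : ℤ) := by
    apply Finset.sum_le_card_nsmul
    intro i hi
    rcases h2 i with h | h
    · exact absurd h (Finset.mem_filter.1 hi).2
    · omega
  rw [heq] at hle
  calc d1 x y ≤ (Finset.univ.filter (fun i => x i ≠ y i)).card • (1 : ℤ) := hle
    _ = ((Finset.univ.filter (fun i => x i ≠ y i)).card : ℤ) := by simp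
    _ ≤ 1 := by exact_mod_cast h3

/-- Along a cube, g is nonexpansive toward any point of the cube it fixes. -/
lemma reach {n : ℕ} {X : Set (Fin n → ℤ)} {g : (Fin n → ℤ) → (Fin n → ℤ)}
    (hg : DigCont (cAdj n 1) (cAdj n 1) X g)
    (a b : Fin n → ℤ) (hKX : {x : Fin n → ℤ | ∀ j, a j ≤ x j ∧ x j ≤ b j} ⊆ X)
    (c : Fin n → ℤ) (hc : ∀ j, a j ≤ c j ∧ c j ≤ b j) (hgc : g c = c) :
    ∀ (m : ℕ) (x : Fin n → ℤ), (∀ j, a j ≤ x j ∧ x j ≤ b j) → d1 x c = m →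
      d1 (g x) c ≤ m := by
  intro m
  induction m with
  | zero =>
    intro x hx h0
    have hxc : x = c := d1_eq_zero h0
    rw [hxc, hgc, show d1 c c = 0 from by simp [d1]]
    simp
  | succ m ih =>
    intro x hx hm
    -- find a coordinate where x differs from c
    have hne : x ≠ c := by
      intro h
      rw [h] at hm
      simp [d1] at hm
      omega
    have hj : ∃ j, x j ≠ c j := by
      by_contra h
      push_neg at h
      exact hne (funext h)
    obtain ⟨j, hj⟩ := hj
    -- step toward c
    obtain ⟨s, hs1, hsa, hsb, hsabs⟩ :
        ∃ s : ℤ, |s| = 1 ∧ a j ≤ x j + s ∧ x j + s ≤ b j ∧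
          |x j + s - c j| = |x j - c j| - 1 := by
      rcases lt_or_gt_of_ne hj with h | h
      · refine ⟨1, by norm_num, by linarith [(hx j).1], by linarith [(hc j).2], ?_⟩
        have h1 : |x j - c j| = c j - x j := by rw [abs_of_nonpos (by omega)]; ring
        have h2 : |x j + 1 - c j| = c j - x j - 1 := by
          rw [abs_of_nonpos (by omega)]; ring
        omega
      · refine ⟨-1, by norm_num, by linarith [(hc j).1], by linarith [(hx j).2], ?_⟩
        have h1 : |x j - c j| = x j - c j := abs_of_nonneg (by omega)
        have h2 : |x j + -1 - c j| = x j - c j - 1 := by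
          rw [abs_of_nonneg (by omega)]; ring
        omega
    set x' : Fin n → ℤ := Function.update x j (x j + s) with hx'def
    have hx'j : x' j = x j + s := Function.update_self j _ x
    have hx'i : ∀ i, i ≠ j → x' i = x i := fun i hi => Function.update_of_ne hi _ x
    have hx' : ∀ i, a i ≤ x' i ∧ x' i ≤ b i := by
      intro i
      by_cases hij : i = j
      · subst hij; rw [hx'j]; exact ⟨hsa, hsb⟩
      · rw [hx'i i hij]; exact hx i
    have hadj : cAdj n 1 x x' := by
      refine ⟨?_, ?_, ?_⟩
      · intro h
        have := congrFun h j
        rw [hx'j] at this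
        have : s = 0 := by omega
        rw [this] at hs1; norm_num at hs1
      · intro i
        by_cases hij : i = j
        · right
          rw [hij, hx'j]
          have h2 : x j - (x j + s) = -s := by ring
          rw [h2, abs_neg, hs1]
        · left; rw [hx'i i hij]
      · have hsub : Finset.univ.filter (fun i => x i ≠ x' i) ⊆ {j} := by
          intro i hi
          rcases Finset.mem_filter.1 hi with ⟨-, hne⟩
          by_contra hij
          exact hne (hx'i i (by simpa using hij)).symm
        calc (Finset.univ.filter (fun i => x i ≠ x' i)).card ≤ ({j} : Finset (Fin n)).card :=
              Finset.card_le_card hsub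
          _ = 1 := Finset.card_singleton j
    have hd : d1 x' c = m := by
      have hsum : d1 x c - d1 x' c = ∑ i, (|x i - c i| - |x' i - c i|) := by
        rw [d1, d1, Finset.sum_sub_distrib]
      have hone : ∑ i, (|x i - c i| - |x' i - c i|) = 1 := by
        rw [Finset.sum_eq_single j]
        · rw [hx'j, hsabs]; ring
        · intro i _ hij; rw [hx'i i hij]; ring
        · intro h; exact absurd (Finset.mem_univ j) h
      omega
    have hgd : d1 (g x) (g x') ≤ 1 := by
      rcases hg x (hKX hx) x' (hKX hx') hadj with h | h
      · rw [h, show d1 (g x') (g x') = 0 from by simp [d1]]; norm_num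
      · exact adj_d1 h
    calc d1 (g x) c ≤ d1 (g x) (g x') + d1 (g x') c := d1_triangle _ _ _
      _ ≤ 1 + m := add_le_add hgd (ih x' hx' hd)
      _ = (m + 1 : ℕ) := by push_cast; ring

/-- Any continuous self-map of a superset of a cube fixing the cube's corners
fixes the cube pointwise. -/
lemma cube_fixed {n : ℕ} {X : Set (Fin n → ℤ)} {g : (Fin n → ℤ) → (Fin n → ℤ)}
    (hg : DigCont (cAdj n 1) (cAdj n 1) X g)
    (a b : Fin n → ℤ) (hab : ∀ j, a j ≤ b j)
    (hKX : {x : Fin n → ℤ | ∀ j, a j ≤ x j ∧ x j ≤ b j} ⊆ X)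
    (hfix : ∀ c : Fin n → ℤ, (∀ j, c j = a j ∨ c j = b j) → g c = c)
    {x : Fin n → ℤ} (hx : ∀ j, a j ≤ x j ∧ x j ≤ b j) : g x = x := by
  funext j
  set y := g x with hy
  have key : ∀ c : Fin n → ℤ, (∀ i, c i = a i ∨ c i = b i) → d1 y c ≤ d1 x c := by
    intro c hc
    have hcK : ∀ i, a i ≤ c i ∧ c i ≤ b i := by
      intro i
      rcases hc i with h | h <;> rw [h] <;> exact ⟨by linarith [hab i], by linarith [hab i]⟩
    have hmt := reach hg a b hKX c hcK (hfix c hc) (d1 x c).toNat x hx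
      (Int.toNat_of_nonneg (d1_nonneg x c)).symm
    calc d1 y c ≤ ((d1 x c).toNat : ℤ) := hmt
      _ = d1 x c := Int.toNat_of_nonneg (d1_nonneg x c)
  -- off-j corner choice giving nonnegative gaps
  have hnn : ∀ (c : Fin n → ℤ), (∀ i, i ≠ j → c i = if x i ≤ y i then a i else b i) →
      ∀ i ∈ Finset.univ.erase j, 0 ≤ |y i - c i| - |x i - c i| := by
    intro c hcoff i hi
    have hij : i ≠ j := (Finset.mem_erase.1 hi).1
    rw [hcoff i hij]
    by_cases hle : x i ≤ y i
    · simp only [if_pos hle]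
      have h1 : |x i - a i| = x i - a i := abs_of_nonneg (by linarith [(hx i).1])
      have h2 : y i - a i ≤ |y i - a i| := le_abs_self _
      linarith
    · simp only [if_neg hle]
      have h1 : |x i - b i| = b i - x i := by rw [abs_of_nonpos (by linarith [(hx i).2])]; ring
      have h2 : b i - y i ≤ |y i - b i| := by
        calc b i - y i = -(y i - b i) := by ring
          _ ≤ |y i - b i| := neg_le_abs _
      linarith
  have hsplit : ∀ f : Fin n → ℤ, ∑ i, f i = f j + ∑ i ∈ Finset.univ.erase j, f i :=
    fun f => (Finset.add_sum_erase _ f (Finset.mem_univ j)).symm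
  have h1 : y j ≤ x j := by
    set c : Fin n → ℤ := fun i => if i = j then a i else if x i ≤ y i then a i else b i with hcdef
    have hcc : ∀ i, c i = a i ∨ c i = b i := by
      intro i
      by_cases hij : i = j
      · left; simp [hcdef, hij]
      · simp only [hcdef, if_neg hij]
        by_cases hle : x i ≤ y i
        · left; rw [if_pos hle]
        · right; rw [if_neg hle]
    have hk := key c hcc
    have hsum : ∑ i, (|y i - c i| - |x i - c i|) ≤ 0 := by
      rw [Finset.sum_sub_distrib]
      have : d1 y c ≤ d1 x c := hk
      rw [d1, d1] at this
      linarith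
    have hcj : c j = a j := by simp [hcdef]
    have hjterm : y j - x j ≤ |y j - c j| - |x j - c j| := by
      rw [hcj]
      have h1 : |x j - a j| = x j - a j := abs_of_nonneg (by linarith [(hx j).1])
      have h2 : y j - a j ≤ |y j - a j| := le_abs_self _
      linarith
    have hrest : 0 ≤ ∑ i ∈ Finset.univ.erase j, (|y i - c i| - |x i - c i|) :=
      Finset.sum_nonneg (hnn c (fun i hij => by simp [hcdef, if_neg hij]))
    have := hsplit (fun i => |y i - c i| - |x i - c i|)
    linarith
  have h2 : x j ≤ y j := by
    set c : Fin n → ℤ := fun i => if i = j then b i else if x i ≤ y i then a i else b i with hcdef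
    have hcc : ∀ i, c i = a i ∨ c i = b i := by
      intro i
      by_cases hij : i = j
      · right; simp [hcdef, hij]
      · simp only [hcdef, if_neg hij]
        by_cases hle : x i ≤ y i
        · left; rw [if_pos hle]
        · right; rw [if_neg hle]
    have hk := key c hcc
    have hsum : ∑ i, (|y i - c i| - |x i - c i|) ≤ 0 := by
      rw [Finset.sum_sub_distrib]
      have : d1 y c ≤ d1 x c := hk
      rw [d1, d1] at this
      linarith
    have hcj : c j = b j := by simp [hcdef]
    have hjterm : x j - y j ≤ |y j - c j| - |x j - c j| := by
      rw [hcj]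
      have h1 : |x j - b j| = b j - x j := by rw [abs_of_nonpos (by linarith [(hx j).2])]; ring
      have h2 : b j - y j ≤ |y j - b j| := by
        calc b j - y j = -(y j - b j) := by ring
          _ ≤ |y j - b j| := neg_le_abs _
      linarith
    have hrest : 0 ≤ ∑ i ∈ Finset.univ.erase j, (|y i - c i| - |x i - c i|) :=
      Finset.sum_nonneg (hnn c (fun i hij => by simp [hcdef, if_neg hij]))
    have := hsplit (fun i => |y i - c i| - |x i - c i|)
    linarith
  omega

/-- The wedge of two digital cubes has the union of their corner sets as a
c_1-freezing set. -/
theorem wedge_corners_freezingSet_c1 {n : ℕ} (a₁ b₁ a₂ b₂ : Fin n → ℤ)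
    (K₁ K₂ : Set (Fin n → ℤ))
    (hK₁ : K₁ = {x | ∀ j, a₁ j ≤ x j ∧ x j ≤ b₁ j})
    (hK₂ : K₂ = {x | ∀ j, a₂ j ≤ x j ∧ x j ≤ b₂ j})
    (p : Fin n → ℤ) (hwedge : K₁ ∩ K₂ = {p}) :
    FreezingSet (cAdj n 1) (K₁ ∪ K₂)
      ({x | ∀ j, x j = a₁ j ∨ x j = b₁ j} ∪ {x | ∀ j, x j = a₂ j ∨ x j = b₂ j}) := by
  have hp : p ∈ K₁ ∩ K₂ := hwedge ▸ Set.mem_singleton p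
  have hp₁ : ∀ j, a₁ j ≤ p j ∧ p j ≤ b₁ j := by
    have := hp.1; rw [hK₁] at this; exact this
  have hp₂ : ∀ j, a₂ j ≤ p j ∧ p j ≤ b₂ j := by
    have := hp.2; rw [hK₂] at this; exact this
  have hab₁ : ∀ j, a₁ j ≤ b₁ j := fun j => le_trans (hp₁ j).1 (hp₁ j).2
  have hab₂ : ∀ j, a₂ j ≤ b₂ j := fun j => le_trans (hp₂ j).1 (hp₂ j).2
  have hc₁ : {x : Fin n → ℤ | ∀ j, x j = a₁ j ∨ x j = b₁ j} ⊆ K₁ := by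
    intro x hx
    rw [hK₁]
    intro j
    rcases hx j with h | h <;> rw [h] <;> exact ⟨by linarith [hab₁ j], by linarith [hab₁ j]⟩
  have hc₂ : {x : Fin n → ℤ | ∀ j, x j = a₂ j ∨ x j = b₂ j} ⊆ K₂ := by
    intro x hx
    rw [hK₂]
    intro j
    rcases hx j with h | h <;> rw [h] <;> exact ⟨by linarith [hab₂ j], by linarith [hab₂ j]⟩
  constructor
  · intro x hx
    rcases hx with hx | hx
    · exact Or.inl (hc₁ hx)
    · exact Or.inr (hc₂ hx)
  · intro g hgX hgc hfix x hx
    rcases hx with hx | hx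
    · rw [hK₁] at hx
      exact cube_fixed hgc a₁ b₁ hab₁ (by rw [← hK₁]; exact Set.subset_union_left)
        (fun c hcc => hfix c (Or.inl hcc)) hx
    · rw [hK₂] at hx
      exact cube_fixed hgc a₂ b₂ hab₂ (by rw [← hK₂]; exact Set.subset_union_right)
        (fun c hcc => hfix c (Or.inr hcc)) hx
end

section
/- Let X be a finite digital image in ℤⁿ and 1 ≤ u ≤ n. Then Bd(X) is a freezing set for (X, c_u). -/
lemma cAdj_coord {n u : ℕ} {a b : Fin n → ℤ} (h : cAdj n u a b) (i : Fin n) :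
    |a i - b i| ≤ 1 := by
  rcases h.2.1 i with h' | h'
  · simp [h']
  · exact le_of_eq h'

lemma cAdj_step {n : ℕ} (x : Fin n → ℤ) (i : Fin n) (ε : ℤ) (hε : ε = 1 ∨ ε = -1)
    (k : ℕ) :
    cAdj n 1 (Function.update x i (x i + ε * k)) (Function.update x i (x i + ε * (k + 1))) := by
  have hεne : ε ≠ 0 := by rcases hε with h | h <;> simp [h]
  have hne : x i + ε * k ≠ x i + ε * (k + 1) := by
    intro h
    have : ε * (k : ℤ) = ε * ((k : ℤ) + 1) := by linarith
    have := mul_left_cancel₀ hεne this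
    omega
  refine ⟨?_, ?_, ?_⟩
  · intro h
    exact hne (by simpa using congrFun h i)
  · intro j
    by_cases hj : j = i
    · subst hj
      right
      simp only [Function.update_self]
      rcases hε with h | h <;> simp [h]
    · left; simp [Function.update_of_ne hj]
  · have : (Finset.univ.filter fun j =>
        Function.update x i (x i + ε * k) j ≠ Function.update x i (x i + ε * (k+1)) j) = {i} := by
      ext j
      simp only [Finset.mem_filter, Finset.mem_univ, true_and, Finset.mem_singleton]
      constructor
      · intro hj
        by_contra hji
        exact hj (by simp [Function.update_of_ne hji])
      · intro hj; subst hj; simpa using hne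
    rw [this]; simp

lemma walk {n u : ℕ} (hu1 : 1 ≤ u) {X : Set (Fin n → ℤ)} (hX : X.Finite)
    (g : (Fin n → ℤ) → Fin n → ℤ)
    (hgc : DigCont (cAdj n u) (cAdj n u) X g)
    (hfix : ∀ a ∈ Bd n X, g a = a)
    (x : Fin n → ℤ) (hx : x ∈ X) (i : Fin n) (ε : ℤ) (hε : ε = 1 ∨ ε = -1) :
    ∃ s : ℕ, |g x i - (x i + ε * s)| ≤ s := by
  classical
  have hεne : ε ≠ 0 := by rcases hε with h | h <;> simp [h]
  set pt : ℕ → (Fin n → ℤ) := fun k => Function.update x i (x i + ε * k) with hpt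
  have hpt0 : pt 0 = x := by simp [hpt]
  have hinj : Function.Injective pt := by
    intro a b hab
    have := congrFun hab i
    simp only [hpt, Function.update_self, add_right_inj] at this
    have := mul_left_cancel₀ hεne this
    exact_mod_cast this
  have hex : ∃ k, pt k ∉ X := by
    by_contra h
    push_neg at h
    have h1 : Set.range pt ⊆ X := Set.range_subset_iff.mpr h
    exact (Set.infinite_range_of_injective hinj) (hX.subset h1)
  set N := Nat.find hex with hNdef
  have hN : pt N ∉ X := Nat.find_spec hex
  have hlt : ∀ m, m < N → pt m ∈ X := by
    intro m hm
    by_contra h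
    exact Nat.find_min hex hm h
  have hN0 : N ≠ 0 := by
    intro h
    rw [h, hpt0] at hN
    exact hN hx
  obtain ⟨s, hs1⟩ : ∃ s, N = s + 1 := ⟨N - 1, by omega⟩
  have hadj : ∀ k : ℕ, cAdj n 1 (pt k) (pt (k + 1)) := fun k => cAdj_step x i ε hε k
  have hadju : ∀ k : ℕ, cAdj n u (pt k) (pt (k + 1)) := by
    intro k
    obtain ⟨h1, h2, h3⟩ := hadj k
    exact ⟨h1, h2, le_trans h3 hu1⟩
  have chain : ∀ k, k < N → |g (pt k) i - g x i| ≤ k := by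
    intro k
    induction k with
    | zero => intro _; simp [hpt0]
    | succ k ih =>
      intro hk
      have hk' : k < N := by omega
      have h1 : |g (pt (k + 1)) i - g (pt k) i| ≤ 1 := by
        rcases hgc (pt k) (hlt k hk') (pt (k + 1)) (hlt _ hk) (hadju k) with h | h
        · simp [h]
        · have := cAdj_coord h i
          rwa [abs_sub_comm] at this
      calc |g (pt (k + 1)) i - g x i|
          ≤ |g (pt (k + 1)) i - g (pt k) i| + |g (pt k) i - g x i| := abs_sub_le _ _ _
        _ ≤ 1 + k := add_le_add h1 (ih hk')
        _ = ((k + 1 : ℕ) : ℤ) := by push_cast; ring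
  have hsX : pt s ∈ X := hlt s (by omega)
  have hbd : pt s ∈ Bd n X := ⟨hsX, ⟨pt (s + 1), by rw [← hs1]; exact hN, hadj s⟩⟩
  have hgfix : g (pt s) = pt s := hfix _ hbd
  have hchain := chain s (by omega)
  rw [hgfix] at hchain
  have hpts : pt s i = x i + ε * s := by simp [hpt]
  rw [hpts] at hchain
  refine ⟨s, ?_⟩
  rwa [abs_sub_comm] at hchain

/-- The boundary of a finite digital image X is a freezing set for (X, c_u). -/
theorem bd_freezingSet {n u : ℕ} (hu1 : 1 ≤ u) (hun : u ≤ n)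
    (X : Set (Fin n → ℤ)) (hX : X.Finite) :
    FreezingSet (cAdj n u) X (Bd n X) := by
  refine ⟨fun a ha => ha.1, ?_⟩
  intro g hgX hgc hfix x hx
  funext i
  obtain ⟨s, hs⟩ := walk hu1 hX g hgc hfix x hx i 1 (Or.inl rfl)
  obtain ⟨t, ht⟩ := walk hu1 hX g hgc hfix x hx i (-1) (Or.inr rfl)
  rw [abs_le] at hs ht
  have h1 : x i ≤ g x i := by
    have := hs.1
    linarith [hs.1]
  have h2 : g x i ≤ x i := by
    have := ht.2
    linarith [ht.2]
  omega
end
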